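/- Let p, q > 0 be real numbers with p² + q² = 1. Then the function φ_{p,q}(x,y) = 4·arctan( (p·cosh(q y)) / (q·cosh(p x)) ) − π satisfies −Δφ_{p,q} = sin φ_{p,q} at every point of ℝ², and |φ_{p,q}(x,y)| < π for all (x,y) ∈ ℝ². -/

import Mathlib

/-- Partial derivative in the first variable of a function of two real variables. -/
noncomputable def pdx (u : ℝ → ℝ → ℝ) (x y : ℝ) : ℝ := deriv (fun s => u s y) x

/-- Partial derivative in the second variable of a function of two real variables. -/
noncomputable def pdy (u : ℝ → ℝ → ℝ) (x y : ℝ) : ℝ := deriv (fun t => u x t) y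

/-- The Laplacian of a function of two real variables. -/
noncomputable def lap (u : ℝ → ℝ → ℝ) (x y : ℝ) : ℝ := pdx (pdx u) x y + pdy (pdy u) x y

/-- The four-end solutions of the elliptic sine-Gordon equation. -/
noncomputable def phiFourEnd (p q : ℝ) (x y : ℝ) : ℝ :=
  4 * Real.arctan ((p * Real.cosh (q * y)) / (q * Real.cosh (p * x))) - Real.pi

private lemma sin_four_arctan_sub_pi (t : ℝ) :
    Real.sin (4 * Real.arctan t - Real.pi) = -(4 * t * (1 - t ^ 2) / (1 + t ^ 2) ^ 2) := by
  have h0 : (0:ℝ) < 1 + t ^ 2 := by positivity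
  have key : Real.sin (Real.arctan t) * Real.cos (Real.arctan t) = t / (1 + t ^ 2) := by
    rw [Real.sin_arctan, Real.cos_arctan, div_mul_div_comm, mul_one,
      Real.mul_self_sqrt h0.le]
  have key2 : Real.cos (Real.arctan t) ^ 2 = 1 / (1 + t ^ 2) := Real.cos_sq_arctan t
  have h4 : Real.sin (4 * Real.arctan t) = 4 * t * (1 - t ^ 2) / (1 + t ^ 2) ^ 2 := by
    rw [show (4:ℝ) * Real.arctan t = 2 * (2 * Real.arctan t) by ring,
      Real.sin_two_mul, Real.sin_two_mul, Real.cos_two_mul,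
      mul_assoc 2 (Real.sin (Real.arctan t)) (Real.cos (Real.arctan t)), key, key2]
    field_simp
    ring
  rw [Real.sin_sub, Real.sin_pi, Real.cos_pi, h4]; ring

private lemma hasDeriv_x (p q : ℝ) (hp : 0 < p) (hq : 0 < q) (y x : ℝ) :
    HasDerivAt (fun s => phiFourEnd p q s y)
      (-(4 * p ^ 2 * q * Real.cosh (q * y) * Real.sinh (p * x)) /
        (q ^ 2 * Real.cosh (p * x) ^ 2 + p ^ 2 * Real.cosh (q * y) ^ 2)) x := by
  have h1 : HasDerivAt (fun s : ℝ => p * s) p x := by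
    simpa using (hasDerivAt_id x).const_mul p
  have h2 : HasDerivAt (fun s => Real.cosh (p * s)) (Real.sinh (p * x) * p) x := h1.cosh
  have h3 : HasDerivAt (fun s => q * Real.cosh (p * s)) (q * (Real.sinh (p * x) * p)) x :=
    h2.const_mul q
  have hne : q * Real.cosh (p * x) ≠ 0 := by positivity
  have h4 := (hasDerivAt_const x (p * Real.cosh (q * y))).div h3 hne
  have h5 := ((h4.arctan).const_mul 4).sub_const Real.pi
  have h6 : HasDerivAt (fun s => phiFourEnd p q s y)
      (4 * (1 / (1 + (p * Real.cosh (q * y) / (q * Real.cosh (p * x))) ^ 2) *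
        ((0 * (q * Real.cosh (p * x)) - p * Real.cosh (q * y) * (q * (Real.sinh (p * x) * p))) /
          (q * Real.cosh (p * x)) ^ 2))) x := h5
  have hcx : Real.cosh (p * x) ≠ 0 := (Real.cosh_pos _).ne'
  have hDpos : (0:ℝ) < q ^ 2 * Real.cosh (p * x) ^ 2 + p ^ 2 * Real.cosh (q * y) ^ 2 :=
    add_pos_of_pos_of_nonneg (mul_pos (pow_pos hq 2) (pow_pos (Real.cosh_pos _) 2)) (by positivity)
  have hfpos : (0:ℝ) < 1 + (p * Real.cosh (q * y) / (q * Real.cosh (p * x))) ^ 2 := by positivity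
  have hval : (4 * (1 / (1 + (p * Real.cosh (q * y) / (q * Real.cosh (p * x))) ^ 2) *
        ((0 * (q * Real.cosh (p * x)) - p * Real.cosh (q * y) * (q * (Real.sinh (p * x) * p))) /
          (q * Real.cosh (p * x)) ^ 2)))
      = -(4 * p ^ 2 * q * Real.cosh (q * y) * Real.sinh (p * x)) /
        (q ^ 2 * Real.cosh (p * x) ^ 2 + p ^ 2 * Real.cosh (q * y) ^ 2) := by
    rw [eq_div_iff hDpos.ne']
    field_simp
    ring
  rw [hval] at h6
  exact h6

private lemma hasDeriv_y (p q : ℝ) (hp : 0 < p) (hq : 0 < q) (x y : ℝ) :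
    HasDerivAt (fun t => phiFourEnd p q x t)
      ((4 * p * q ^ 2 * Real.cosh (p * x) * Real.sinh (q * y)) /
        (q ^ 2 * Real.cosh (p * x) ^ 2 + p ^ 2 * Real.cosh (q * y) ^ 2)) y := by
  have h1 : HasDerivAt (fun t : ℝ => q * t) q y := by
    simpa using (hasDerivAt_id y).const_mul q
  have h2 : HasDerivAt (fun t => Real.cosh (q * t)) (Real.sinh (q * y) * q) y := h1.cosh
  have h3 : HasDerivAt (fun t => p * Real.cosh (q * t)) (p * (Real.sinh (q * y) * q)) y :=
    h2.const_mul p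
  have hne : q * Real.cosh (p * x) ≠ 0 := by positivity
  have h4 := h3.div (hasDerivAt_const y (q * Real.cosh (p * x))) hne
  have h5 := ((h4.arctan).const_mul 4).sub_const Real.pi
  have h6 : HasDerivAt (fun t => phiFourEnd p q x t)
      (4 * (1 / (1 + (p * Real.cosh (q * y) / (q * Real.cosh (p * x))) ^ 2) *
        ((p * (Real.sinh (q * y) * q) * (q * Real.cosh (p * x)) - p * Real.cosh (q * y) * 0) /
          (q * Real.cosh (p * x)) ^ 2))) y := h5
  have hcx : Real.cosh (p * x) ≠ 0 := (Real.cosh_pos _).ne'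
  have hDpos : (0:ℝ) < q ^ 2 * Real.cosh (p * x) ^ 2 + p ^ 2 * Real.cosh (q * y) ^ 2 :=
    add_pos_of_pos_of_nonneg (mul_pos (pow_pos hq 2) (pow_pos (Real.cosh_pos _) 2)) (by positivity)
  have hval : (4 * (1 / (1 + (p * Real.cosh (q * y) / (q * Real.cosh (p * x))) ^ 2) *
        ((p * (Real.sinh (q * y) * q) * (q * Real.cosh (p * x)) - p * Real.cosh (q * y) * 0) /
          (q * Real.cosh (p * x)) ^ 2)))
      = (4 * p * q ^ 2 * Real.cosh (p * x) * Real.sinh (q * y)) /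
        (q ^ 2 * Real.cosh (p * x) ^ 2 + p ^ 2 * Real.cosh (q * y) ^ 2) := by
    rw [eq_div_iff hDpos.ne']
    field_simp
    ring
  rw [hval] at h6
  exact h6

private lemma hasDeriv_xx (p q : ℝ) (hp : 0 < p) (hq : 0 < q) (y x : ℝ) :
    HasDerivAt (fun s => -(4 * p ^ 2 * q * Real.cosh (q * y) * Real.sinh (p * s)) /
        (q ^ 2 * Real.cosh (p * s) ^ 2 + p ^ 2 * Real.cosh (q * y) ^ 2))
      ((-(4 * p ^ 3 * q * Real.cosh (q * y) * Real.cosh (p * x)) *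
          (q ^ 2 * Real.cosh (p * x) ^ 2 + p ^ 2 * Real.cosh (q * y) ^ 2) +
        8 * p ^ 3 * q ^ 3 * Real.cosh (q * y) * Real.cosh (p * x) * Real.sinh (p * x) ^ 2) /
        (q ^ 2 * Real.cosh (p * x) ^ 2 + p ^ 2 * Real.cosh (q * y) ^ 2) ^ 2) x := by
  have h1 : HasDerivAt (fun s : ℝ => p * s) p x := by
    simpa using (hasDerivAt_id x).const_mul p
  have hu : HasDerivAt (fun s => -(4 * p ^ 2 * q * Real.cosh (q * y) * Real.sinh (p * s)))
      (-(4 * p ^ 2 * q * Real.cosh (q * y) * (Real.cosh (p * x) * p))) x :=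
    (h1.sinh.const_mul (4 * p ^ 2 * q * Real.cosh (q * y))).neg
  have hv : HasDerivAt (fun s => q ^ 2 * Real.cosh (p * s) ^ 2 + p ^ 2 * Real.cosh (q * y) ^ 2)
      (q ^ 2 * ((2:ℕ) * Real.cosh (p * x) ^ (2 - 1) * (Real.sinh (p * x) * p))) x :=
    ((h1.cosh.pow 2).const_mul (q ^ 2)).add_const (p ^ 2 * Real.cosh (q * y) ^ 2)
  have hDpos : (0:ℝ) < q ^ 2 * Real.cosh (p * x) ^ 2 + p ^ 2 * Real.cosh (q * y) ^ 2 :=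
    add_pos_of_pos_of_nonneg (mul_pos (pow_pos hq 2) (pow_pos (Real.cosh_pos _) 2)) (by positivity)
  have h := hu.div hv hDpos.ne'
  have hval : (-(4 * p ^ 2 * q * Real.cosh (q * y) * (Real.cosh (p * x) * p)) *
        (q ^ 2 * Real.cosh (p * x) ^ 2 + p ^ 2 * Real.cosh (q * y) ^ 2) -
      -(4 * p ^ 2 * q * Real.cosh (q * y) * Real.sinh (p * x)) *
        (q ^ 2 * ((2:ℕ) * Real.cosh (p * x) ^ (2 - 1) * (Real.sinh (p * x) * p)))) /
      (q ^ 2 * Real.cosh (p * x) ^ 2 + p ^ 2 * Real.cosh (q * y) ^ 2) ^ 2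
      = (-(4 * p ^ 3 * q * Real.cosh (q * y) * Real.cosh (p * x)) *
          (q ^ 2 * Real.cosh (p * x) ^ 2 + p ^ 2 * Real.cosh (q * y) ^ 2) +
        8 * p ^ 3 * q ^ 3 * Real.cosh (q * y) * Real.cosh (p * x) * Real.sinh (p * x) ^ 2) /
        (q ^ 2 * Real.cosh (p * x) ^ 2 + p ^ 2 * Real.cosh (q * y) ^ 2) ^ 2 := by
    push_cast
    ring
  rw [hval] at h
  exact h

private lemma hasDeriv_yy (p q : ℝ) (hp : 0 < p) (hq : 0 < q) (x y : ℝ) :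
    HasDerivAt (fun t => (4 * p * q ^ 2 * Real.cosh (p * x) * Real.sinh (q * t)) /
        (q ^ 2 * Real.cosh (p * x) ^ 2 + p ^ 2 * Real.cosh (q * t) ^ 2))
      ((4 * p * q ^ 3 * Real.cosh (p * x) * Real.cosh (q * y) *
          (q ^ 2 * Real.cosh (p * x) ^ 2 + p ^ 2 * Real.cosh (q * y) ^ 2) -
        8 * p ^ 3 * q ^ 3 * Real.cosh (p * x) * Real.cosh (q * y) * Real.sinh (q * y) ^ 2) /
        (q ^ 2 * Real.cosh (p * x) ^ 2 + p ^ 2 * Real.cosh (q * y) ^ 2) ^ 2) y := by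
  have h1 : HasDerivAt (fun t : ℝ => q * t) q y := by
    simpa using (hasDerivAt_id y).const_mul q
  have hu : HasDerivAt (fun t => 4 * p * q ^ 2 * Real.cosh (p * x) * Real.sinh (q * t))
      (4 * p * q ^ 2 * Real.cosh (p * x) * (Real.cosh (q * y) * q)) y :=
    h1.sinh.const_mul (4 * p * q ^ 2 * Real.cosh (p * x))
  have hv : HasDerivAt (fun t => q ^ 2 * Real.cosh (p * x) ^ 2 + p ^ 2 * Real.cosh (q * t) ^ 2)
      (p ^ 2 * ((2:ℕ) * Real.cosh (q * y) ^ (2 - 1) * (Real.sinh (q * y) * q))) y :=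
    ((h1.cosh.pow 2).const_mul (p ^ 2)).const_add (q ^ 2 * Real.cosh (p * x) ^ 2)
  have hDpos : (0:ℝ) < q ^ 2 * Real.cosh (p * x) ^ 2 + p ^ 2 * Real.cosh (q * y) ^ 2 :=
    add_pos_of_pos_of_nonneg (mul_pos (pow_pos hq 2) (pow_pos (Real.cosh_pos _) 2)) (by positivity)
  have h := hu.div hv hDpos.ne'
  have hval : (4 * p * q ^ 2 * Real.cosh (p * x) * (Real.cosh (q * y) * q) *
        (q ^ 2 * Real.cosh (p * x) ^ 2 + p ^ 2 * Real.cosh (q * y) ^ 2) -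
      4 * p * q ^ 2 * Real.cosh (p * x) * Real.sinh (q * y) *
        (p ^ 2 * ((2:ℕ) * Real.cosh (q * y) ^ (2 - 1) * (Real.sinh (q * y) * q)))) /
      (q ^ 2 * Real.cosh (p * x) ^ 2 + p ^ 2 * Real.cosh (q * y) ^ 2) ^ 2
      = (4 * p * q ^ 3 * Real.cosh (p * x) * Real.cosh (q * y) *
          (q ^ 2 * Real.cosh (p * x) ^ 2 + p ^ 2 * Real.cosh (q * y) ^ 2) -
        8 * p ^ 3 * q ^ 3 * Real.cosh (p * x) * Real.cosh (q * y) * Real.sinh (q * y) ^ 2) /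
        (q ^ 2 * Real.cosh (p * x) ^ 2 + p ^ 2 * Real.cosh (q * y) ^ 2) ^ 2 := by
    push_cast
    ring
  rw [hval] at h
  exact h

theorem fourEnd_solves_sineGordon (p q : ℝ) (hp : 0 < p) (hq : 0 < q)
    (hpq : p ^ 2 + q ^ 2 = 1) :
    ∀ x y : ℝ,
      (-(lap (phiFourEnd p q) x y) = Real.sin (phiFourEnd p q x y)) ∧
      |phiFourEnd p q x y| < Real.pi := by
  intro x y
  have hcx : Real.cosh (p * x) ≠ 0 := (Real.cosh_pos _).ne'
  have hcy : Real.cosh (q * y) ≠ 0 := (Real.cosh_pos _).ne'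
  have hDpos : (0:ℝ) < q ^ 2 * Real.cosh (p * x) ^ 2 + p ^ 2 * Real.cosh (q * y) ^ 2 :=
    add_pos_of_pos_of_nonneg (mul_pos (pow_pos hq 2) (pow_pos (Real.cosh_pos _) 2)) (by positivity)
  constructor
  · -- the PDE
    have EX : ∀ s, pdx (phiFourEnd p q) s y
        = -(4 * p ^ 2 * q * Real.cosh (q * y) * Real.sinh (p * s)) /
          (q ^ 2 * Real.cosh (p * s) ^ 2 + p ^ 2 * Real.cosh (q * y) ^ 2) :=
      fun s => (hasDeriv_x p q hp hq y s).deriv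
    have EY : ∀ t, pdy (phiFourEnd p q) x t
        = (4 * p * q ^ 2 * Real.cosh (p * x) * Real.sinh (q * t)) /
          (q ^ 2 * Real.cosh (p * x) ^ 2 + p ^ 2 * Real.cosh (q * t) ^ 2) :=
      fun t => (hasDeriv_y p q hp hq x t).deriv
    have hxx : pdx (pdx (phiFourEnd p q)) x y
        = (-(4 * p ^ 3 * q * Real.cosh (q * y) * Real.cosh (p * x)) *
            (q ^ 2 * Real.cosh (p * x) ^ 2 + p ^ 2 * Real.cosh (q * y) ^ 2) +
          8 * p ^ 3 * q ^ 3 * Real.cosh (q * y) * Real.cosh (p * x) * Real.sinh (p * x) ^ 2) /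
          (q ^ 2 * Real.cosh (p * x) ^ 2 + p ^ 2 * Real.cosh (q * y) ^ 2) ^ 2 := by
      have : (fun s => pdx (phiFourEnd p q) s y)
          = fun s => -(4 * p ^ 2 * q * Real.cosh (q * y) * Real.sinh (p * s)) /
            (q ^ 2 * Real.cosh (p * s) ^ 2 + p ^ 2 * Real.cosh (q * y) ^ 2) := funext EX
      show deriv (fun s => pdx (phiFourEnd p q) s y) x = _
      rw [this]
      exact (hasDeriv_xx p q hp hq y x).deriv
    have hyy : pdy (pdy (phiFourEnd p q)) x y
        = (4 * p * q ^ 3 * Real.cosh (p * x) * Real.cosh (q * y) *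
            (q ^ 2 * Real.cosh (p * x) ^ 2 + p ^ 2 * Real.cosh (q * y) ^ 2) -
          8 * p ^ 3 * q ^ 3 * Real.cosh (p * x) * Real.cosh (q * y) * Real.sinh (q * y) ^ 2) /
          (q ^ 2 * Real.cosh (p * x) ^ 2 + p ^ 2 * Real.cosh (q * y) ^ 2) ^ 2 := by
      have : (fun t => pdy (phiFourEnd p q) x t)
          = fun t => (4 * p * q ^ 2 * Real.cosh (p * x) * Real.sinh (q * t)) /
            (q ^ 2 * Real.cosh (p * x) ^ 2 + p ^ 2 * Real.cosh (q * t) ^ 2) := funext EY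
      show deriv (fun t => pdy (phiFourEnd p q) x t) y = _
      rw [this]
      exact (hasDeriv_yy p q hp hq x y).deriv
    have hsin : Real.sin (phiFourEnd p q x y)
        = -((4 * p * q * Real.cosh (p * x) * Real.cosh (q * y) *
            (q ^ 2 * Real.cosh (p * x) ^ 2 - p ^ 2 * Real.cosh (q * y) ^ 2)) /
          (q ^ 2 * Real.cosh (p * x) ^ 2 + p ^ 2 * Real.cosh (q * y) ^ 2) ^ 2) := by
      rw [show phiFourEnd p q x y
          = 4 * Real.arctan (p * Real.cosh (q * y) / (q * Real.cosh (p * x))) - Real.pi from rfl,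
        sin_four_arctan_sub_pi]
      have hfpos : (0:ℝ) < 1 + (p * Real.cosh (q * y) / (q * Real.cosh (p * x))) ^ 2 := by
        positivity
      rw [neg_inj, div_eq_div_iff (by positivity) (by positivity : (q ^ 2 * Real.cosh (p * x) ^ 2 + p ^ 2 * Real.cosh (q * y) ^ 2) ^ 2 ≠ 0)]
      field_simp
    show -(pdx (pdx (phiFourEnd p q)) x y + pdy (pdy (phiFourEnd p q)) x y)
        = Real.sin (phiFourEnd p q x y)
    rw [hxx, hyy, hsin, ← add_div, neg_inj]
    congr 1
    have hs2 := Real.sinh_sq (p * x)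
    have hS2 := Real.sinh_sq (q * y)
    linear_combination (8 * p ^ 3 * q ^ 3 * Real.cosh (q * y) * Real.cosh (p * x)) * hs2
      - (8 * p ^ 3 * q ^ 3 * Real.cosh (p * x) * Real.cosh (q * y)) * hS2
      + (4 * p * q * Real.cosh (p * x) * Real.cosh (q * y) *
          (q ^ 2 * Real.cosh (p * x) ^ 2 - p ^ 2 * Real.cosh (q * y) ^ 2)) * hpq
  · -- the bound
    have hf : (0:ℝ) < p * Real.cosh (q * y) / (q * Real.cosh (p * x)) :=
      div_pos (mul_pos hp (Real.cosh_pos _)) (mul_pos hq (Real.cosh_pos _))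
    have h1 : (0:ℝ) < Real.arctan (p * Real.cosh (q * y) / (q * Real.cosh (p * x))) := by
      have := Real.arctan_strictMono hf
      rwa [Real.arctan_zero] at this
    have h2 := Real.arctan_lt_pi_div_two (p * Real.cosh (q * y) / (q * Real.cosh (p * x)))
    have hpi := Real.pi_pos
    rw [abs_lt]
    unfold phiFourEnd
    constructor <;> nlinarith [h1, h2]
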